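/- arXiv:2202.08988 — 4 statements merged into one kernel-verified Lean document; each statement's English description precedes it below -/
import Mathlib

section
/- For n even, σ > 0, and k > 0, the integral over the n-dimensional ball of radius k of the standard isotropic Gaussian density with variance σ^2 per coordinate equals 1 - exp(-k^2/(2σ^2)) · Σ_{d=0}^{n/2 - 1} k^{2d}/(2^d σ^{2d} d!). -/
open Real MeasureTheory Finset


lemma gauss_antideriv (c : ℝ) (hc : c ≠ 0) (m : ℕ) (r : ℝ) :
    HasDerivAt (fun r : ℝ =>
        -(Real.exp (-r ^ 2 / c) * ∑ d ∈ Finset.range (m + 1), r ^ (2 * d) / (c ^ d * d.factorial)))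
      (2 * r ^ (2 * m + 1) * Real.exp (-r ^ 2 / c) / (c ^ (m + 1) * m.factorial)) r := by
  induction m with
  | zero =>
      have he : HasDerivAt (fun r : ℝ => Real.exp (-r ^ 2 / c))
          (Real.exp (-r ^ 2 / c) * (-(2 * r ^ 1) / c)) r :=
        (((hasDerivAt_pow 2 r).neg).div_const c).exp
      convert he.neg using 1
      any_goals rfl
      · funext r; simp
      · simp only [Nat.factorial_zero, pow_one, Nat.cast_one]
        field_simp
        ring
  | succ m ih =>
      have he : HasDerivAt (fun r : ℝ => Real.exp (-r ^ 2 / c))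
          (Real.exp (-r ^ 2 / c) * (-(2 * r ^ 1) / c)) r :=
        (((hasDerivAt_pow 2 r).neg).div_const c).exp
      have hg : HasDerivAt (fun r : ℝ =>
          -(Real.exp (-r ^ 2 / c) * r ^ (2 * (m + 1)) / (c ^ (m + 1) * (m + 1).factorial)))
          (-((Real.exp (-r ^ 2 / c) * (-(2 * r ^ 1) / c) * r ^ (2 * (m + 1)) +
              Real.exp (-r ^ 2 / c) * ((2 * (m + 1) : ℕ) * r ^ (2 * (m + 1) - 1))) /
            (c ^ (m + 1) * (m + 1).factorial))) r :=
        (((he.mul (hasDerivAt_pow (2 * (m + 1)) r)).div_const _)).neg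
      convert ih.add hg using 1
      any_goals rfl
      · funext r
        rw [Pi.add_apply, Finset.sum_range_succ]
        ring
      · have hf : ((m + 1).factorial : ℝ) = (m + 1) * m.factorial := by
          push_cast [Nat.factorial_succ]; ring
        have h1 : (2 * (m + 1) - 1 : ℕ) = 2 * m + 1 := by omega
        have hfm : (m.factorial : ℝ) ≠ 0 := Nat.cast_ne_zero.mpr m.factorial_ne_zero
        rw [h1, hf]
        push_cast
        field_simp
        ring

lemma gauss_radial_integral (c : ℝ) (hc : 0 < c) (m : ℕ) (k : ℝ) :
    ∫ r in (0:ℝ)..k, r ^ (2 * m + 1) * Real.exp (-r ^ 2 / c) =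
      (c ^ (m + 1) * m.factorial / 2) *
        (1 - Real.exp (-k ^ 2 / c) *
          ∑ d ∈ Finset.range (m + 1), k ^ (2 * d) / (c ^ d * d.factorial)) := by
  have hC : (0:ℝ) < c ^ (m + 1) * m.factorial := by positivity
  have hcont : Continuous fun r : ℝ =>
      2 * r ^ (2 * m + 1) * Real.exp (-r ^ 2 / c) / (c ^ (m + 1) * m.factorial) := by
    fun_prop
  have h := intervalIntegral.integral_eq_sub_of_hasDerivAt
    (f := fun r : ℝ =>
        -(Real.exp (-r ^ 2 / c) * ∑ d ∈ Finset.range (m + 1), r ^ (2 * d) / (c ^ d * d.factorial)))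
    (fun r _ => gauss_antideriv c hc.ne' m r) (hcont.intervalIntegrable 0 k)
  have hzero : ∑ d ∈ Finset.range (m + 1), (0:ℝ) ^ (2 * d) / (c ^ d * d.factorial) = 1 := by
    rw [Finset.sum_eq_single 0]
    · simp
    · intro d _ hd
      rw [zero_pow (by omega), zero_div]
    · simp
  rw [show (fun r : ℝ => 2 * r ^ (2 * m + 1) * Real.exp (-r ^ 2 / c) / (c ^ (m + 1) * m.factorial))
      = fun r : ℝ => (2 / (c ^ (m + 1) * m.factorial)) * (r ^ (2 * m + 1) * Real.exp (-r ^ 2 / c))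
      from by funext r; ring, intervalIntegral.integral_const_mul] at h
  simp only [hzero] at h
  have h2 : (2 / (c ^ (m + 1) * (m.factorial:ℝ))) ≠ 0 := by positivity
  field_simp at h ⊢
  have h0 : Real.exp (-((0:ℝ) ^ 2 / c)) = 1 := by simp
  linear_combination h + c ^ (m + 1) * (m.factorial:ℝ) * h0

/-- For even `n`, the isotropic Gaussian of variance `σ^2` per coordinate assigns mass
`1 - exp(-k^2/(2σ^2)) ∑_{d=0}^{n/2-1} k^{2d}/(2^d σ^{2d} d!)` to the ball of radius `k`. -/
theorem stmt10 (n : ℕ) (hn : 0 < n) (hne : Even n) (σ k : ℝ) (hσ : 0 < σ) (hk : 0 < k) :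
    (∫ x in Metric.closedBall (0 : EuclideanSpace ℝ (Fin n)) k,
        (2 * π * σ ^ 2) ^ (-(n : ℝ) / 2) * Real.exp (-‖x‖ ^ 2 / (2 * σ ^ 2))) =
      1 - Real.exp (-k ^ 2 / (2 * σ ^ 2)) *
        ∑ d ∈ Finset.range (n / 2), k ^ (2 * d) / (2 ^ d * σ ^ (2 * d) * (d.factorial : ℝ)) := by
  obtain ⟨m, hm⟩ : ∃ m, n = 2 * (m + 1) := by
    obtain ⟨j, hj⟩ := hne; exact ⟨j - 1, by omega⟩
  subst hm
  set C : ℝ := (2 * π * σ ^ 2) ^ (-((2 * (m + 1) : ℕ) : ℝ) / 2) with hC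
  set g : ℝ → ℝ := Set.indicator (Set.Iic k) (fun r => C * Real.exp (-r ^ 2 / (2 * σ ^ 2))) with hg
  have step1 : (∫ x in Metric.closedBall (0 : EuclideanSpace ℝ (Fin (2 * (m + 1)))) k,
      C * Real.exp (-‖x‖ ^ 2 / (2 * σ ^ 2))) = ∫ x : EuclideanSpace ℝ (Fin (2 * (m + 1))), g ‖x‖ := by
    rw [← integral_indicator (measurableSet_closedBall)]
    congr 1
    funext x
    by_cases hx : x ∈ Metric.closedBall (0 : EuclideanSpace ℝ (Fin (2 * (m + 1)))) k
    · rw [Set.indicator_of_mem hx, hg, Set.indicator_of_mem]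
      simpa [Metric.mem_closedBall, dist_zero_right] using hx
    · rw [Set.indicator_of_notMem hx, hg, Set.indicator_of_notMem]
      simpa [Metric.mem_closedBall, dist_zero_right] using hx
  rw [step1]
  rw [MeasureTheory.integral_fun_norm_addHaar volume g]
  rw [finrank_euclideanSpace_fin]
  have hvol : (volume (Metric.ball (0 : EuclideanSpace ℝ (Fin (2 * (m + 1)))) 1)).toReal
      = π ^ (m + 1) / (m + 1).factorial := by
    rw [EuclideanSpace.volume_ball]
    rw [ENNReal.toReal_mul]
    simp only [Fintype.card_fin, ENNReal.ofReal_one, one_pow, ENNReal.toReal_one, one_mul]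
    rw [ENNReal.toReal_ofReal (by positivity)]
    congr 1
    · rw [show 2 * (m + 1) = (m + 1) * 2 by ring, pow_mul, ← pow_mul, mul_comm (m+1) 2, pow_mul,
        Real.sq_sqrt pi_nonneg]
    · rw [show (((2 * (m + 1) : ℕ) : ℝ)) / 2 + 1 = ((m + 1 : ℕ) : ℝ) + 1 by push_cast; ring,
        Real.Gamma_nat_eq_factorial]
  rw [measureReal_def, hvol, nsmul_eq_mul, smul_eq_mul]
  have hσ2 : (0:ℝ) < 2 * σ ^ 2 := by positivity
  have hexp : (2 * (m + 1) - 1 : ℕ) = 2 * m + 1 := by omega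
  have hind : (fun y : ℝ => y ^ (2 * (m + 1) - 1) • g y)
      = Set.indicator (Set.Iic k)
        (fun y => y ^ (2 * m + 1) * (C * Real.exp (-y ^ 2 / (2 * σ ^ 2)))) := by
    funext y
    by_cases hy : y ∈ Set.Iic k
    · rw [hexp]
      rw [hg, Set.indicator_of_mem hy, Set.indicator_of_mem hy, smul_eq_mul]
    · rw [hg, Set.indicator_of_notMem hy, Set.indicator_of_notMem hy, smul_zero]
  rw [hind, setIntegral_indicator measurableSet_Iic, Set.Ioi_inter_Iic,
    ← intervalIntegral.integral_of_le hk.le]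
  rw [show (fun y : ℝ => y ^ (2 * m + 1) * (C * Real.exp (-y ^ 2 / (2 * σ ^ 2))))
      = fun y : ℝ => C * (y ^ (2 * m + 1) * Real.exp (-y ^ 2 / (2 * σ ^ 2))) from by
        funext y; ring]
  rw [intervalIntegral.integral_const_mul, gauss_radial_integral _ hσ2 m k]
  have hS : ∑ d ∈ Finset.range (m + 1), k ^ (2 * d) / ((2 * σ ^ 2) ^ d * d.factorial)
      = ∑ d ∈ Finset.range ((2 * (m + 1)) / 2),
          k ^ (2 * d) / (2 ^ d * σ ^ (2 * d) * (d.factorial : ℝ)) := by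
    rw [show (2 * (m + 1)) / 2 = m + 1 by omega]
    refine Finset.sum_congr rfl fun d _ => ?_
    rw [mul_pow, ← pow_mul]
  rw [hS]
  have hCeq : C = ((2 * π * σ ^ 2) ^ (m + 1))⁻¹ := by
    rw [hC, show (-((2 * (m + 1) : ℕ) : ℝ) / 2) = -((m + 1 : ℕ) : ℝ) by push_cast; ring,
      Real.rpow_neg (by positivity), Real.rpow_natCast]
  rw [hCeq]
  generalize (1 - Real.exp (-k ^ 2 / (2 * σ ^ 2)) *
      ∑ d ∈ Finset.range ((2 * (m + 1)) / 2),
        k ^ (2 * d) / (2 ^ d * σ ^ (2 * d) * (d.factorial : ℝ))) = X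
  have hfact : (((m + 1).factorial : ℝ)) = (m + 1) * m.factorial := by
    push_cast [Nat.factorial_succ]; ring
  have hfm : ((m.factorial : ℝ)) ≠ 0 := Nat.cast_ne_zero.mpr m.factorial_ne_zero
  have hπ : (π : ℝ) ≠ 0 := pi_ne_zero
  rw [hfact]
  push_cast
  rw [mul_pow, mul_pow]
  field_simp
  ring
end

section
/- For n odd, σ > 0, and k > 0, the integral over the n-dimensional ball of radius k of the isotropic Gaussian density with variance σ^2 per coordinate equals √(2/π) · exp(-k^2/(2σ^2)) · Σ'_{j≥n} k^j/(σ^j j!!), where the primed sum runs over j = n, n+2, n+4, .... -/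
open Real MeasureTheory Nat Filter Topology

lemma aux_df_odd (p : ℕ) : (2*p+3)‼ = (2*p+3) * (2*p+1)‼ := by
  have := Nat.doubleFactorial_add_two (2*p+1)
  rw [show 2*p+1+2 = 2*p+3 from by omega] at this
  exact this

lemma aux_df_ge (p : ℕ) : 2^p * p ! ≤ (2*p+1)‼ := by
  induction p with
  | zero => simp
  | succ q ih =>
    rw [show 2*(q+1)+1 = 2*q+3 from by omega, aux_df_odd]
    calc 2^(q+1) * (q+1)! = (2*(q+1)) * (2^q * q !) := by
          rw [Nat.factorial_succ]; ring
      _ ≤ (2*q+3) * (2*q+1)‼ := Nat.mul_le_mul (by omega) ih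

lemma aux_odd_le (p : ℕ) : 2*p+1 ≤ 2^(p+1) := by
  induction p with
  | zero => simp
  | succ q ih =>
    have h2 : 2^(q+1+1) = 2 * 2^(q+1) := by rw [pow_succ]; ring
    omega

lemma aux_key_le (p : ℕ) : (2*p+1) * p ! ≤ 2 * (2*p+1)‼ := by
  calc (2*p+1) * p ! ≤ 2^(p+1) * p ! := Nat.mul_le_mul_right _ (aux_odd_le p)
    _ = 2 * (2^p * p !) := by rw [pow_succ]; ring
    _ ≤ 2 * (2*p+1)‼ := Nat.mul_le_mul_left _ (aux_df_ge p)

lemma aux_df_pos (p : ℕ) : (0:ℝ) < ((2*p+1)‼ : ℝ) := by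
  exact_mod_cast Nat.doubleFactorial_pos _

/-- auxiliary integrand -/
noncomputable def gaussφ (p : ℕ) (s : ℝ) : ℝ :=
  (2*p+1) * s^(2*p) * Real.exp (-s^2/2) / ((2*p+1)‼ : ℝ)

/-- auxiliary integral -/
noncomputable def gaussΦ (t : ℝ) (p : ℕ) : ℝ := ∫ s in (0:ℝ)..t, gaussφ p s

lemma gaussφ_cont (p : ℕ) : Continuous (gaussφ p) := by
  apply Continuous.div_const
  exact ((continuous_const.mul (continuous_pow _)).mul
    ((continuous_pow 2).neg.div_const 2).rexp)

lemma aux_hD (p : ℕ) : ((2*(p+1)+1)‼ : ℝ) = (2*p+3) * ((2*p+1)‼:ℝ) := by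
  rw [show 2*(p+1)+1 = 2*p+3 from by omega]
  exact_mod_cast congrArg (Nat.cast : ℕ → ℝ) (aux_df_odd p)

lemma gauss_hasDerivAt (p : ℕ) (s : ℝ) :
    HasDerivAt (fun u : ℝ => u^(2*p+1) * Real.exp (-u^2/2) / ((2*p+1)‼:ℝ))
      (gaussφ p s - gaussφ (p+1) s) s := by
  have h1 : HasDerivAt (fun u : ℝ => -u^2/2) (-(2*s^1)/2) s :=
    ((hasDerivAt_pow 2 s).neg.div_const 2)
  have h2 : HasDerivAt (fun u : ℝ => Real.exp (-u^2/2))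
      (Real.exp (-s^2/2) * (-(2*s^1)/2)) s := h1.exp
  have h3 := ((hasDerivAt_pow (2*p+1) s).mul h2).div_const ((2*p+1)‼:ℝ)
  refine h3.congr_deriv ?_
  simp only [gaussφ, aux_hD]
  rw [show 2*p+1-1 = 2*p from by omega]
  have := (aux_df_pos p).ne'
  field_simp
  push_cast
  ring

lemma gauss_key (p : ℕ) (t : ℝ) :
    t^(2*p+1) * Real.exp (-t^2/2) / ((2*p+1)‼ : ℝ) = gaussΦ t p - gaussΦ t (p+1) := by
  have hint : IntervalIntegrable (fun s => gaussφ p s - gaussφ (p+1) s) volume 0 t :=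
    ((gaussφ_cont p).sub (gaussφ_cont (p+1))).intervalIntegrable _ _
  have hftc := intervalIntegral.integral_eq_sub_of_hasDerivAt
    (fun s _ => gauss_hasDerivAt p s) hint
  have hsub : (∫ s in (0:ℝ)..t, (gaussφ p s - gaussφ (p+1) s)) = gaussΦ t p - gaussΦ t (p+1) :=
    intervalIntegral.integral_sub ((gaussφ_cont p).intervalIntegrable _ _)
      ((gaussφ_cont (p+1)).intervalIntegrable _ _)
  rw [← hsub, hftc]
  simp [zero_pow (by omega : 2*p+1 ≠ 0)]

lemma gaussΦ_nonneg (t : ℝ) (ht : 0 ≤ t) (p : ℕ) : 0 ≤ gaussΦ t p := by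
  apply intervalIntegral.integral_nonneg ht
  intro s hs
  have : (0:ℝ) ≤ s := hs.1
  unfold gaussφ
  positivity

lemma gaussΦ_le (t : ℝ) (ht : 0 ≤ t) (p : ℕ) : gaussΦ t p ≤ 2*t*(t^2)^p/(p)! := by
  have hDpos := aux_df_pos p
  have hle : ∀ s ∈ Set.Icc (0:ℝ) t, gaussφ p s ≤ (2*p+1) * t^(2*p) / ((2*p+1)‼:ℝ) := by
    intro s hs
    have h1 : s^(2*p) ≤ t^(2*p) := pow_le_pow_left₀ hs.1 hs.2 _
    have h2 : Real.exp (-s^2/2) ≤ 1 := by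
      rw [Real.exp_le_one_iff]
      nlinarith [sq_nonneg s]
    apply div_le_div_of_nonneg_right ?_ hDpos.le
    calc (2*↑p+1) * s^(2*p) * Real.exp (-s^2/2) ≤ (2*↑p+1) * t^(2*p) * 1 := by
          apply mul_le_mul _ h2 (Real.exp_pos _).le (by positivity)
          exact mul_le_mul_of_nonneg_left h1 (by positivity)
      _ = (2*↑p+1) * t^(2*p) := mul_one _
  have hstep1 : gaussΦ t p ≤ t * ((2*p+1) * t^(2*p) / ((2*p+1)‼:ℝ)) := by
    have := intervalIntegral.integral_mono_on ht
      ((gaussφ_cont p).intervalIntegrable 0 t)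
      (intervalIntegrable_const (μ := volume)) hle
    rwa [intervalIntegral.integral_const, sub_zero, smul_eq_mul] at this
  apply hstep1.trans
  have hfrac : ((2*p+1:ℕ):ℝ)/((2*p+1)‼:ℝ) ≤ 2/(p ! : ℝ) := by
    rw [div_le_div_iff₀ hDpos (by exact_mod_cast Nat.factorial_pos p)]
    exact_mod_cast aux_key_le p
  have hcast : ((2*p+1:ℕ):ℝ) = 2*(p:ℝ)+1 := by push_cast; ring
  rw [hcast] at hfrac
  calc t * ((2*↑p+1) * t^(2*p) / ((2*p+1)‼:ℝ))
      = (t * t^(2*p)) * ((2*↑p+1)/((2*p+1)‼:ℝ)) := by ring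
    _ ≤ (t * t^(2*p)) * (2/(p ! : ℝ)) := by
        apply mul_le_mul_of_nonneg_left hfrac (by positivity)
    _ = 2*t*(t^2)^p/(p)! := by rw [← pow_mul]; ring

lemma gauss_hasSum (m : ℕ) (t : ℝ) (ht : 0 ≤ t) :
    HasSum (fun j : ℕ => t^(2*(m+j)+1) * Real.exp (-t^2/2) / ((2*(m+j)+1)‼ : ℝ))
      ((2*m+1) * (∫ s in (0:ℝ)..t, s^(2*m) * Real.exp (-s^2/2)) / ((2*m+1)‼ : ℝ)) := by
  have hnonneg : ∀ j : ℕ, 0 ≤ t^(2*(m+j)+1) * Real.exp (-t^2/2) / ((2*(m+j)+1)‼ : ℝ) := by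
    intro j
    have := aux_df_pos (m+j)
    positivity
  have hpart : ∀ N : ℕ, ∑ j ∈ Finset.range N,
      t^(2*(m+j)+1) * Real.exp (-t^2/2) / ((2*(m+j)+1)‼ : ℝ) = gaussΦ t m - gaussΦ t (m+N) := by
    intro N
    rw [Finset.sum_congr rfl (fun j _ => gauss_key (m+j) t)]
    exact Finset.sum_range_sub' (fun j => gaussΦ t (m+j)) N
  have htail : Tendsto (fun N : ℕ => gaussΦ t (m+N)) atTop (𝓝 0) := by
    have h0 : Tendsto (fun p : ℕ => (t^2)^p/(p)! : ℕ → ℝ) atTop (𝓝 0) :=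
      (Real.summable_pow_div_factorial (t^2)).tendsto_atTop_zero
    have h1 : Tendsto (fun N : ℕ => 2*t*((t^2)^(m+N)/((m+N)! : ℝ))) atTop (𝓝 (2*t*0)) := by
      apply Tendsto.const_mul
      have := h0.comp (tendsto_add_atTop_nat m)
      simpa [Function.comp_def, add_comm] using this
    rw [mul_zero] at h1
    apply squeeze_zero (fun N => gaussΦ_nonneg t ht (m+N)) _ h1
    intro N
    have := gaussΦ_le t ht (m+N)
    calc gaussΦ t (m+N) ≤ 2*t*(t^2)^(m+N)/((m+N)!) := this
      _ = 2*t*((t^2)^(m+N)/((m+N)! : ℝ)) := by ring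
  have hΦm : gaussΦ t m
      = (2*m+1) * (∫ s in (0:ℝ)..t, s^(2*m) * Real.exp (-s^2/2)) / ((2*m+1)‼ : ℝ) := by
    unfold gaussΦ gaussφ
    rw [show (fun s : ℝ => (2*↑m+1) * s^(2*m) * Real.exp (-s^2/2) / ((2*m+1)‼ : ℝ))
        = fun s : ℝ => ((2*↑m+1)/((2*m+1)‼ : ℝ)) * (s^(2*m) * Real.exp (-s^2/2)) from
        funext fun s => by ring]
    rw [intervalIntegral.integral_const_mul]
    ring
  rw [hasSum_iff_tendsto_nat_of_nonneg hnonneg]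
  simp only [hpart]
  rw [← hΦm]
  simpa using tendsto_const_nhds.sub htail

lemma gamma_odd_half (m : ℕ) :
    Real.Gamma ((2*m+1:ℝ)/2 + 1) = ((2*m+1)‼ : ℝ) * Real.sqrt π / 2^(m+1) := by
  induction m with
  | zero =>
    have h : ((2*(0:ℕ)+1:ℝ))/2 + 1 = 1/2 + 1 := by norm_num
    rw [h, Real.Gamma_add_one (by norm_num), Real.Gamma_one_half_eq]
    norm_num
    ring
  | succ q ih =>
    have hx : (2*((q+1:ℕ)):ℝ)+1 = (2*(q:ℝ)+1) + 2 := by push_cast; ring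
    rw [hx, show ((2*(q:ℝ)+1)+2)/2 + 1 = ((2*(q:ℝ)+1)/2 + 1) + 1 from by ring,
      Real.Gamma_add_one (by positivity), ih, aux_hD q]
    rw [show ((q:ℕ)+1+1) = q+2 from rfl]
    push_cast
    rw [pow_succ, pow_succ]
    field_simp
    ring

lemma polar_step (n : ℕ) (hn : 0 < n) (k : ℝ) (hk : 0 < k) (σ : ℝ) :
    (∫ x in Metric.closedBall (0 : EuclideanSpace ℝ (Fin n)) k,
        Real.exp (-‖x‖ ^ 2 / (2 * σ ^ 2)))
      = n * (Real.sqrt π^n / Real.Gamma ((n:ℝ)/2+1)) *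
          ∫ y in (0:ℝ)..k, y^(n-1) * Real.exp (-y^2/(2*σ^2)) := by
  haveI : Nonempty (Fin n) := ⟨⟨0, hn⟩⟩
  haveI : Nontrivial (EuclideanSpace ℝ (Fin n)) := inferInstance
  have hΓ : 0 < Real.Gamma ((n:ℝ)/2+1) := Real.Gamma_pos_of_pos (by positivity)
  rw [← MeasureTheory.integral_indicator measurableSet_closedBall]
  have h1 : ∀ x : EuclideanSpace ℝ (Fin n),
      (Metric.closedBall (0 : EuclideanSpace ℝ (Fin n)) k).indicator
        (fun x => Real.exp (-‖x‖^2/(2*σ^2))) x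
      = Set.indicator (Set.Iic k) (fun r : ℝ => Real.exp (-r^2/(2*σ^2))) ‖x‖ := by
    intro x
    simp [Set.indicator, Set.mem_Iic, mem_closedBall_zero_iff]
  simp_rw [h1]
  rw [MeasureTheory.integral_fun_norm_addHaar volume
    (Set.indicator (Set.Iic k) (fun r : ℝ => Real.exp (-r^2/(2*σ^2))))]
  have h2 : ∀ y : ℝ, y^(Module.finrank ℝ (EuclideanSpace ℝ (Fin n)) - 1) •
      Set.indicator (Set.Iic k) (fun r : ℝ => Real.exp (-r^2/(2*σ^2))) y
      = Set.indicator (Set.Iic k) (fun y : ℝ => y^(n-1) * Real.exp (-y^2/(2*σ^2))) y := by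
    intro y
    simp only [finrank_euclideanSpace_fin, Set.indicator, Set.mem_Iic, smul_eq_mul]
    split_ifs <;> simp
  simp_rw [h2]
  rw [MeasureTheory.setIntegral_indicator measurableSet_Iic, Set.Ioi_inter_Iic,
    ← intervalIntegral.integral_of_le hk.le]
  rw [finrank_euclideanSpace_fin, measureReal_def, EuclideanSpace.volume_ball]
  simp only [Fintype.card_fin, ENNReal.ofReal_one, one_pow, one_mul,
    ENNReal.toReal_ofReal (by positivity : (0:ℝ) ≤ Real.sqrt π^n / Real.Gamma ((n:ℝ)/2+1))]
  rw [nsmul_eq_mul, smul_eq_mul]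
  ring

lemma const_id (m : ℕ) (σ : ℝ) (hσ : 0 < σ) :
    (2*π*σ^2) ^ (-((2*m+1:ℕ):ℝ)/2) * (Real.sqrt π^(2*m+1) / Real.Gamma (((2*m+1:ℕ):ℝ)/2+1))
      = Real.sqrt (2/π) / (((2*m+1)‼:ℝ) * σ^(2*m+1)) := by
  have hπ := Real.pi_pos
  have hD := aux_df_pos m
  have hsπ : 0 < Real.sqrt π := Real.sqrt_pos.mpr hπ
  have hΓarg : ((2*m+1:ℕ):ℝ)/2+1 = (2*(m:ℝ)+1)/2 + 1 := by push_cast; ring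
  rw [hΓarg, gamma_odd_half]
  rw [Real.mul_rpow (by positivity) (by positivity),
      Real.mul_rpow (by positivity) (by positivity)]
  have hσpart : (σ^2) ^ (-((2*m+1:ℕ):ℝ)/2) = (σ^(2*m+1))⁻¹ := by
    rw [← Real.rpow_natCast σ 2, ← Real.rpow_mul hσ.le,
      show ((2:ℕ):ℝ) * (-((2*m+1:ℕ):ℝ)/2) = -((2*m+1:ℕ):ℝ) from by push_cast; ring,
      Real.rpow_neg hσ.le, Real.rpow_natCast]
  have h2part : (2:ℝ) ^ (-((2*m+1:ℕ):ℝ)/2) * 2^(m+1) = Real.sqrt 2 := by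
    rw [← Real.rpow_natCast (2:ℝ) (m+1), ← Real.rpow_add two_pos,
      show -((2*m+1:ℕ):ℝ)/2 + ((m+1:ℕ):ℝ) = 1/2 from by push_cast; ring,
      ← Real.sqrt_eq_rpow]
  have hπpart : π ^ (-((2*m+1:ℕ):ℝ)/2) * π^m = (Real.sqrt π)⁻¹ := by
    rw [← Real.rpow_natCast π m, ← Real.rpow_add hπ,
      show -((2*m+1:ℕ):ℝ)/2 + (m:ℝ) = -(1/2) from by push_cast; ring,
      Real.rpow_neg hπ.le, ← Real.sqrt_eq_rpow]
  have hsqrtpow : Real.sqrt π^(2*m+1) = π^m * Real.sqrt π := by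
    rw [pow_succ, pow_mul, Real.sq_sqrt hπ.le]
  have hsqdiv : Real.sqrt (2/π) = Real.sqrt 2 / Real.sqrt π := by
    rw [Real.sqrt_div (by norm_num : (0:ℝ) ≤ 2)]
  rw [hσpart, hsqrtpow, hsqdiv, ← h2part]
  have hsp : Real.sqrt π = (π ^ (-((2*m+1:ℕ):ℝ)/2) * π^m)⁻¹ := by
    rw [hπpart, inv_inv]
  rw [hsp]
  have ha : (0:ℝ) < (2:ℝ) ^ (-((2*m+1:ℕ):ℝ)/2) := Real.rpow_pos_of_pos two_pos _
  have hb : (0:ℝ) < π ^ (-((2*m+1:ℕ):ℝ)/2) := Real.rpow_pos_of_pos hπ _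
  have hπm : (0:ℝ) < π^m := by positivity
  field_simp

/-- For odd `n`, the isotropic Gaussian of variance `σ^2` per coordinate assigns mass
`√(2/π) exp(-k^2/(2σ^2)) ∑'_{j ≥ n, j ≡ n [2]} k^j/(σ^j j‼)` to the ball of radius `k`. -/
theorem stmt11 (n : ℕ) (hn : 0 < n) (hno : Odd n) (σ k : ℝ) (hσ : 0 < σ) (hk : 0 < k) :
    (∫ x in Metric.closedBall (0 : EuclideanSpace ℝ (Fin n)) k,
        (2 * π * σ ^ 2) ^ (-(n : ℝ) / 2) * Real.exp (-‖x‖ ^ 2 / (2 * σ ^ 2))) =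
      Real.sqrt (2 / π) * Real.exp (-k ^ 2 / (2 * σ ^ 2)) *
        ∑' j : ℕ, k ^ (n + 2 * j) / (σ ^ (n + 2 * j) * ((n + 2 * j)‼ : ℝ)) := by
  obtain ⟨m, rfl⟩ := hno
  have hπ := Real.pi_pos
  have hD := aux_df_pos m
  have ht : 0 ≤ k/σ := by positivity
  -- the radial integral
  set A : ℝ := ∫ y in (0:ℝ)..k, y^(2*m) * Real.exp (-y^2/(2*σ^2)) with hA
  -- substitution s = r/σ
  have hsubst : (∫ s in (0:ℝ)..(k/σ), s^(2*m) * Real.exp (-s^2/2)) = A / σ^(2*m+1) := by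
    have h := intervalIntegral.integral_comp_div (a := 0) (b := k)
      (fun s : ℝ => s^(2*m) * Real.exp (-s^2/2)) hσ.ne'
    rw [zero_div] at h
    have hpt : Set.EqOn (fun x : ℝ => (x/σ)^(2*m) * Real.exp (-(x/σ)^2/2))
        (fun x : ℝ => (1/σ^(2*m)) * (x^(2*m) * Real.exp (-x^2/(2*σ^2)))) (Set.uIcc 0 k) := by
      intro x _
      have harg : -(x/σ)^2/2 = -x^2/(2*σ^2) := by
        rw [div_pow]; ring
      simp only [harg, div_pow]
      ring
    rw [intervalIntegral.integral_congr hpt, intervalIntegral.integral_const_mul] at h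
    have hσN : (0:ℝ) < σ^(2*m) := by positivity
    rw [smul_eq_mul] at h
    field_simp at h ⊢
    rw [pow_succ]
    rw [hA]; simp only [neg_div] at h ⊢; linarith [h]
  -- series value
  have hsum := gauss_hasSum m (k/σ) ht
  rw [hsubst] at hsum
  have hEE : Real.exp (-(k/σ)^2/2) * Real.exp ((k/σ)^2/2) = 1 := by
    rw [← Real.exp_add]; ring_nf; exact Real.exp_zero
  have hfun : (fun j : ℕ => (k/σ)^(2*(m+j)+1) * Real.exp (-(k/σ)^2/2) / ((2*(m+j)+1)‼ : ℝ)
        * Real.exp ((k/σ)^2/2))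
      = fun j : ℕ => k ^ (2*m+1 + 2*j) / (σ ^ (2*m+1 + 2*j) * ((2*m+1 + 2*j)‼ : ℝ)) := by
    funext j
    rw [show 2*m+1+2*j = 2*(m+j)+1 from by ring]
    calc (k/σ)^(2*(m+j)+1) * Real.exp (-(k/σ)^2/2) / ((2*(m+j)+1)‼ : ℝ)
          * Real.exp ((k/σ)^2/2)
        = (k/σ)^(2*(m+j)+1) / ((2*(m+j)+1)‼ : ℝ)
            * (Real.exp (-(k/σ)^2/2) * Real.exp ((k/σ)^2/2)) := by ring
      _ = (k/σ)^(2*(m+j)+1) / ((2*(m+j)+1)‼ : ℝ) := by rw [hEE, mul_one]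
      _ = k ^ (2*(m+j)+1) / (σ ^ (2*(m+j)+1) * ((2*(m+j)+1)‼ : ℝ)) := by
          rw [div_pow, div_div]
  have htsum : (∑' j : ℕ, k ^ (2*m+1 + 2*j) / (σ ^ (2*m+1 + 2*j) * ((2*m+1 + 2*j)‼ : ℝ)))
      = Real.exp ((k/σ)^2/2) * ((2*m+1) * (A / σ^(2*m+1)) / ((2*m+1)‼:ℝ)) := by
    have h2 := hsum.mul_right (Real.exp ((k/σ)^2/2))
    rw [hfun] at h2
    rw [h2.tsum_eq]; ring
  -- LHS via polar coordinates
  rw [MeasureTheory.integral_const_mul, polar_step (2*m+1) hn k hk σ,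
    show 2*m+1-1 = 2*m from by omega, ← hA, htsum]
  have hexp2 : Real.exp (-k ^ 2 / (2 * σ ^ 2)) * Real.exp ((k/σ)^2/2) = 1 := by
    rw [← Real.exp_add, show (k/σ)^2/2 = k^2/(2*σ^2) from by rw [div_pow]; field_simp]
    ring_nf
    exact Real.exp_zero
  have hc := const_id m σ hσ
  -- final algebra
  calc (2*π*σ^2) ^ (-((2*m+1:ℕ):ℝ)/2)
        * ((2*m+1:ℕ) * (Real.sqrt π^(2*m+1) / Real.Gamma (((2*m+1:ℕ):ℝ)/2+1)) * A)
      = ((2*m+1:ℕ):ℝ) * A *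
          ((2*π*σ^2) ^ (-((2*m+1:ℕ):ℝ)/2)
            * (Real.sqrt π^(2*m+1) / Real.Gamma (((2*m+1:ℕ):ℝ)/2+1))) := by ring
    _ = ((2*m+1:ℕ):ℝ) * A * (Real.sqrt (2/π) / (((2*m+1)‼:ℝ) * σ^(2*m+1))) := by rw [hc]
    _ = Real.sqrt (2/π) * (Real.exp (-k ^ 2 / (2 * σ ^ 2)) * Real.exp ((k/σ)^2/2))
          * (((2*m+1:ℕ):ℝ) * (A / σ^(2*m+1)) / ((2*m+1)‼:ℝ)) := by
        rw [hexp2]; push_cast; field_simp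
    _ = Real.sqrt (2/π) * Real.exp (-k ^ 2 / (2 * σ ^ 2))
          * (Real.exp ((k/σ)^2/2) * ((2*↑m+1) * (A / σ^(2*m+1)) / ((2*m+1)‼:ℝ))) := by
        push_cast; ring
end

section
/- For positive integer c and real k ≥ 1, with σ^2 = (4π(c^2+c)/9)·((k+c)^3 - (k-1)^3), the series Σ_{l=1}^∞ l! 2^l k^{2l+1} / (σ^{2l+1} (2l+1)!) is bounded above by (√3/(12(c+1)√(πc))) · 3/(2πc(c+1)^2 - 3). -/
open Real

lemma fac_bound6 (n : ℕ) (hn : 1 ≤ n) : 6 * n.factorial ≤ (2 * n + 1).factorial := by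
  induction n with
  | zero => omega
  | succ m ih =>
    rcases Nat.eq_zero_or_pos m with hm | hm
    · subst hm; decide
    · have h1 := ih hm
      have he : 2 * (m + 1) + 1 = ((2 * m + 1) + 1) + 1 := by ring
      rw [he, Nat.factorial_succ, Nat.factorial_succ]
      calc 6 * ((m + 1) * m.factorial) = (m + 1) * (6 * m.factorial) := by ring
        _ ≤ (m + 1) * (2 * m + 1).factorial := Nat.mul_le_mul_left _ h1
        _ ≤ (((2 * m + 1) + 1 + 1) * ((2 * m + 1) + 1)) * (2 * m + 1).factorial :=
            Nat.mul_le_mul_right _ (by nlinarith)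
        _ = ((2 * m + 1) + 1 + 1) * (((2 * m + 1) + 1) * (2 * m + 1).factorial) := by ring

/-- With `σ = √((4π(c^2+c)/9)((k+c)^3-(k-1)^3))`, the series
`∑_{l=1}^∞ l! 2^l k^{2l+1}/(σ^{2l+1} (2l+1)!)` is at most
`(√3/(12(c+1)√(πc))) · 3/(2πc(c+1)^2 - 3)`. -/
theorem stmt13 (c : ℕ) (hc : 0 < c) (k : ℝ) (hk : 1 ≤ k) :
    (∑' l : ℕ, ((l + 1).factorial : ℝ) * 2 ^ (l + 1) * k ^ (2 * (l + 1) + 1) /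
        ((Real.sqrt ((4 * π * ((c : ℝ) ^ 2 + c) / 9) * ((k + c) ^ 3 - (k - 1) ^ 3)))
            ^ (2 * (l + 1) + 1) * ((2 * (l + 1) + 1).factorial : ℝ))) ≤
      (Real.sqrt 3 / (12 * ((c : ℝ) + 1) * Real.sqrt (π * c))) *
        (3 / (2 * π * c * ((c : ℝ) + 1) ^ 2 - 3)) := by
  have hπ := Real.pi_pos
  have hπ3 := Real.pi_gt_three
  have hc1 : (1:ℝ) ≤ (c:ℝ) := by exact_mod_cast hc
  have hcpos : (0:ℝ) < (c:ℝ) := by linarith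
  have hk0 : (0:ℝ) < k := by linarith
  have hcsq : (1:ℝ) ≤ (c:ℝ) ^ 2 := by nlinarith
  have hkc2 : 0 ≤ k * ((c:ℝ) ^ 2 - 1) := mul_nonneg hk0.le (by linarith)
  have hcube : 3 * ((c:ℝ) + 1) * k ^ 2 ≤ (k + c) ^ 3 - (k - 1) ^ 3 := by
    nlinarith [pow_nonneg hcpos.le 3]
  have h16 : (16:ℝ) ≤ 4 * ((c:ℝ) + 1) ^ 2 := by nlinarith
  have hπc : (3:ℝ) ≤ π * c :=
    le_trans hπ3.le (le_mul_of_one_le_right hπ.le hc1)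
  have h48 : (48:ℝ) ≤ 4 * ((c:ℝ) + 1) ^ 2 * (π * c) := by
    nlinarith [mul_le_mul h16 hπc (by norm_num) (by linarith)]
  have h4 : (4:ℝ) ≤ ((c:ℝ) + 1) ^ 2 := by nlinarith
  have h6 : (6:ℝ) ≤ 2 * π * (c:ℝ) := by nlinarith
  have hD : (3:ℝ) < 2 * π * (c:ℝ) * ((c:ℝ) + 1) ^ 2 := by
    nlinarith [mul_le_mul h6 h4 (by norm_num) (by linarith)]
  have hDpos : (0:ℝ) < 2 * π * (c:ℝ) * ((c:ℝ) + 1) ^ 2 := by positivity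
  set σ := Real.sqrt ((4 * π * ((c : ℝ) ^ 2 + c) / 9) * ((k + c) ^ 3 - (k - 1) ^ 3)) with hσdef
  have hargpos : 0 < (4 * π * ((c : ℝ) ^ 2 + c) / 9) * ((k + c) ^ 3 - (k - 1) ^ 3) := by
    apply mul_pos (by positivity)
    have h3 : (k - 1) ^ 3 < (k + c) ^ 3 :=
      pow_lt_pow_left₀ (by linarith) (by linarith) (by norm_num)
    linarith
  have hσpos : 0 < σ := Real.sqrt_pos.mpr hargpos
  have hσsq : σ ^ 2 = (4 * π * ((c:ℝ) ^ 2 + c) / 9) * ((k + c) ^ 3 - (k - 1) ^ 3) :=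
    Real.sq_sqrt hargpos.le
  set r := Real.sqrt 3 / (2 * ((c:ℝ) + 1) * Real.sqrt (π * c)) with hrdef
  have hrpos : 0 < r := by
    apply div_pos (Real.sqrt_pos.mpr (by norm_num)) (by positivity)
  have hr2 : r ^ 2 = 3 / (4 * ((c:ℝ) + 1) ^ 2 * (π * c)) := by
    rw [hrdef, div_pow, mul_pow, mul_pow, Real.sq_sqrt (by norm_num : (0:ℝ) ≤ 3),
      Real.sq_sqrt (by positivity : (0:ℝ) ≤ π * c)]
    ring
  have hσ2 : (4 * π * (c:ℝ) * ((c:ℝ) + 1) ^ 2 / 3) * k ^ 2 ≤ σ ^ 2 := by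
    rw [hσsq]
    calc (4 * π * (c:ℝ) * ((c:ℝ) + 1) ^ 2 / 3) * k ^ 2
        = (4 * π * ((c:ℝ) ^ 2 + c) / 9) * (3 * ((c:ℝ) + 1) * k ^ 2) := by ring
      _ ≤ _ := mul_le_mul_of_nonneg_left hcube (by positivity)
  have hk2 : k ^ 2 ≤ (r * σ) ^ 2 := by
    calc k ^ 2 = r ^ 2 * ((4 * π * (c:ℝ) * ((c:ℝ) + 1) ^ 2 / 3) * k ^ 2) := by
          rw [hr2]; field_simp
      _ ≤ r ^ 2 * σ ^ 2 := mul_le_mul_of_nonneg_left hσ2 (by positivity)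
      _ = (r * σ) ^ 2 := (mul_pow r σ 2).symm
  have hkrσ : k ≤ r * σ := by
    have h1 : k = Real.sqrt (k ^ 2) := (Real.sqrt_sq hk0.le).symm
    have h2 : Real.sqrt ((r * σ) ^ 2) = r * σ :=
      Real.sqrt_sq (by positivity)
    rw [h1, ← h2]
    exact Real.sqrt_le_sqrt hk2
  have hkσr : k / σ ≤ r := (div_le_iff₀ hσpos).mpr (by linarith [hkrσ])
  set A : ℝ := r / 6 with hA
  set q : ℝ := 2 * r ^ 2 with hq
  have hq0 : 0 < q := by positivity
  have hXpos : (0:ℝ) < 4 * ((c:ℝ) + 1) ^ 2 * (π * c) := by positivity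
  have hq6 : q = 6 / (4 * ((c:ℝ) + 1) ^ 2 * (π * c)) := by rw [hq, hr2]; ring
  have hq1 : q < 1 := by
    rw [hq6, div_lt_one hXpos]
    linarith
  -- per-term bound
  have hle : ∀ l : ℕ,
      ((l + 1).factorial : ℝ) * 2 ^ (l + 1) * k ^ (2 * (l + 1) + 1) /
        (σ ^ (2 * (l + 1) + 1) * ((2 * (l + 1) + 1).factorial : ℝ)) ≤ (A * q) * q ^ l := by
    intro l
    have hfacpos : (0:ℝ) < ((2 * (l + 1) + 1).factorial : ℝ) :=
      Nat.cast_pos.mpr (Nat.factorial_pos _)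
    have hfac : (((l + 1).factorial : ℝ)) / ((2 * (l + 1) + 1).factorial : ℝ) ≤ 1 / 6 := by
      rw [div_le_div_iff₀ hfacpos (by norm_num)]
      have h := (Nat.cast_le (α := ℝ)).mpr (fac_bound6 (l + 1) (by omega))
      push_cast at h
      linarith
    have heq : (((l + 1).factorial : ℝ)) * 2 ^ (l + 1) * k ^ (2 * (l + 1) + 1) /
        (σ ^ (2 * (l + 1) + 1) * ((2 * (l + 1) + 1).factorial : ℝ))
        = (((l + 1).factorial : ℝ) / ((2 * (l + 1) + 1).factorial : ℝ)) * 2 ^ (l + 1) *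
          (k / σ) ^ (2 * (l + 1) + 1) := by
      rw [div_pow]
      field_simp
    rw [heq]
    have hstep : (((l + 1).factorial : ℝ) / ((2 * (l + 1) + 1).factorial : ℝ)) * 2 ^ (l + 1) *
          (k / σ) ^ (2 * (l + 1) + 1)
        ≤ (1 / 6) * 2 ^ (l + 1) * r ^ (2 * (l + 1) + 1) := by
      gcongr <;>
        first
          | exact hfac
          | exact hkσr
          | positivity
          | exact div_nonneg hk0.le hσpos.le
    refine hstep.trans_eq ?_
    rw [hA, hq]
    ring
  have hnonneg : ∀ l : ℕ, 0 ≤ ((l + 1).factorial : ℝ) * 2 ^ (l + 1) * k ^ (2 * (l + 1) + 1) /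
      (σ ^ (2 * (l + 1) + 1) * ((2 * (l + 1) + 1).factorial : ℝ)) := by
    intro l; positivity
  have hgsum : Summable (fun l : ℕ => (A * q) * q ^ l) :=
    (summable_geometric_of_lt_one hq0.le hq1).mul_left _
  have hfsum : Summable (fun l : ℕ =>
      ((l + 1).factorial : ℝ) * 2 ^ (l + 1) * k ^ (2 * (l + 1) + 1) /
        (σ ^ (2 * (l + 1) + 1) * ((2 * (l + 1) + 1).factorial : ℝ))) :=
    Summable.of_nonneg_of_le hnonneg hle hgsum
  have hmain := Summable.tsum_le_tsum hle hfsum hgsum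
  have hgeom : (∑' l : ℕ, (A * q) * q ^ l) = (A * q) * (1 - q)⁻¹ := by
    rw [tsum_mul_left, tsum_geometric_of_lt_one hq0.le hq1]
  rw [hgeom] at hmain
  refine hmain.trans_eq ?_
  have hA' : A = Real.sqrt 3 / (12 * ((c : ℝ) + 1) * Real.sqrt (π * c)) := by
    rw [hA, hrdef, div_div]
    congr 1
    ring
  set D : ℝ := 2 * π * (c:ℝ) * ((c:ℝ) + 1) ^ 2 with hDdef
  have hDne : D ≠ 0 := hDpos.ne'
  have hD3 : D - 3 ≠ 0 := by
    have : (0:ℝ) < D - 3 := by linarith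
    exact this.ne'
  have hq' : q = 3 / D := by
    rw [hq6, div_eq_div_iff hXpos.ne' hDne, hDdef]; ring
  have hq13 : q * (1 - q)⁻¹ = 3 / (D - 3) := by
    rw [hq']
    have h1 : (1:ℝ) - 3 / D = (D - 3) / D := by field_simp
    rw [h1, inv_div, div_mul_div_comm, div_eq_div_iff (by positivity) hD3]
    ring
  calc A * q * (1 - q)⁻¹ = A * (q * (1 - q)⁻¹) := by ring
    _ = _ := by rw [hA', hq13]
end

section
/- Let c be a fixed positive integer and n ≥ 5 an odd integer, and let σ_k^2 = (c^2+c)/3 · (π^{n/2}/Γ(n/2+1))·((k+c)^n - (k-1)^n). Then √(2/π) · exp(-k^2/(2σ_k^2)) · Σ'_{j≥n} k^j/(σ_k^j j!!) → 0 as k → ∞, where the primed sum is over j = n, n+2, n+4, .... -/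
open Real Filter Nat

set_option maxHeartbeats 1000000 in
/-- For odd `n ≥ 5` and fixed `c ≥ 1`, with
`σ_k^2 = (c^2+c)/3 · (π^{n/2}/Γ(n/2+1))((k+c)^n - (k-1)^n)`, the quantity
`√(2/π) exp(-k^2/(2σ_k^2)) ∑'_{j ≥ n, j ≡ n [2]} k^j/(σ_k^j j‼)` tends to `0`
as `k → ∞`. -/
theorem stmt17 (n c : ℕ) (hn : 5 ≤ n) (hno : Odd n) (hc : 1 ≤ c) :
    Tendsto (fun k : ℝ =>
        Real.sqrt (2 / π) *
          Real.exp (-k ^ 2 / (2 * (((c : ℝ) ^ 2 + c) / 3 *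
              (π ^ ((n : ℝ) / 2) / Real.Gamma ((n : ℝ) / 2 + 1) *
                ((k + c) ^ n - (k - 1) ^ n))))) *
          ∑' j : ℕ, k ^ (n + 2 * j) /
            ((Real.sqrt (((c : ℝ) ^ 2 + c) / 3 *
                (π ^ ((n : ℝ) / 2) / Real.Gamma ((n : ℝ) / 2 + 1) *
                  ((k + c) ^ n - (k - 1) ^ n)))) ^ (n + 2 * j) * (((n + 2 * j)‼ : ℕ) : ℝ)))
      atTop (nhds 0) := by
  have hπ := Real.pi_pos
  set a1 : ℝ := ((c : ℝ) ^ 2 + c) / 3 with ha1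
  set a2 : ℝ := π ^ ((n : ℝ) / 2) / Real.Gamma ((n : ℝ) / 2 + 1) with ha2
  have hcR : (1 : ℝ) ≤ c := by exact_mod_cast hc
  have ha1p : 0 < a1 := by rw [ha1]; nlinarith
  have ha2p : 0 < a2 := by
    rw [ha2]
    have h1 : (0:ℝ) < π ^ ((n : ℝ) / 2) := Real.rpow_pos_of_pos hπ _
    have h2 : (0:ℝ) < Real.Gamma ((n : ℝ) / 2 + 1) := by
      apply Real.Gamma_pos_of_pos
      have : (0:ℝ) ≤ (n:ℝ)/2 := by positivity
      linarith
    exact div_pos h1 h2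
  obtain ⟨m, rfl⟩ : ∃ m, n = m + 1 := ⟨n - 1, by omega⟩
  -- lower bound on P k := (k+c)^n - (k-1)^n
  have hPlb : ∀ k : ℝ, 1 ≤ k →
      2 * k ^ m ≤ (k + c) ^ (m + 1) - (k - 1) ^ (m + 1) := by
    intro k hk
    have hk1 : (0 : ℝ) ≤ k - 1 := by linarith
    have e1 : (k - 1) ^ (m + 1) ≤ (k - 1) * (k + 1) ^ m := by
      rw [pow_succ]
      calc (k - 1) ^ m * (k - 1) = (k - 1) * (k - 1) ^ m := by ring
        _ ≤ (k - 1) * (k + 1) ^ m := by gcongr <;> linarith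
    have e2 : (k + 1) ^ (m + 1) ≤ (k + c) ^ (m + 1) := by gcongr <;> linarith
    have e3 : (k + 1) ^ (m + 1) = (k + 1) * (k + 1) ^ m := by rw [pow_succ]; ring
    have e4 : 2 * k ^ m ≤ 2 * (k + 1) ^ m := by gcongr <;> linarith
    nlinarith
  have hSpos : ∀ k : ℝ, 1 ≤ k →
      0 < a1 * (a2 * ((k + c) ^ (m + 1) - (k - 1) ^ (m + 1))) := by
    intro k hk
    have h0 : (0 : ℝ) < 2 * k ^ m := by positivity
    have h1 := hPlb k hk
    have h2 : 0 < (k + c) ^ (m + 1) - (k - 1) ^ (m + 1) := by linarith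
    positivity
  -- q k := k^2 / S k tends to 0
  have hq : Tendsto
      (fun k : ℝ => k ^ 2 / (a1 * (a2 * ((k + c) ^ (m + 1) - (k - 1) ^ (m + 1)))))
      atTop (nhds 0) := by
    refine tendsto_of_tendsto_of_tendsto_of_le_of_le'
      (g := fun _ : ℝ => (0 : ℝ))
      (h := fun k : ℝ => (a1 * (a2 * 2))⁻¹ * (k ^ 2)⁻¹)
      tendsto_const_nhds ?_ ?_ ?_
    · have h1 : Tendsto (fun k : ℝ => (k ^ 2)⁻¹) atTop (nhds 0) :=
        (tendsto_pow_atTop (by norm_num : 2 ≠ 0)).inv_tendsto_atTop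
      have := h1.const_mul (a1 * (a2 * 2))⁻¹
      simpa using this
    · filter_upwards [eventually_ge_atTop (1 : ℝ)] with k hk
      exact div_nonneg (by positivity) (hSpos k hk).le
    · filter_upwards [eventually_ge_atTop (1 : ℝ)] with k hk
      have hk0 : (0 : ℝ) ≤ k := by linarith
      have h4 : k ^ 4 ≤ k ^ m := pow_le_pow_right₀ hk (by omega)
      have hstep : a1 * (a2 * 2) * (k ^ 2 * k ^ 2) ≤
          a1 * (a2 * ((k + c) ^ (m + 1) - (k - 1) ^ (m + 1))) := by
        have := hPlb k hk
        calc a1 * (a2 * 2) * (k ^ 2 * k ^ 2) = a1 * (a2 * (2 * k ^ 4)) := by ring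
          _ ≤ a1 * (a2 * (2 * k ^ m)) := by gcongr
          _ ≤ a1 * (a2 * ((k + c) ^ (m + 1) - (k - 1) ^ (m + 1))) := by gcongr
      have hpos : (0 : ℝ) < a1 * (a2 * 2) * (k ^ 2 * k ^ 2) := by positivity
      calc k ^ 2 / (a1 * (a2 * ((k + c) ^ (m + 1) - (k - 1) ^ (m + 1))))
          ≤ k ^ 2 / (a1 * (a2 * 2) * (k ^ 2 * k ^ 2)) :=
            div_le_div_of_nonneg_left (by positivity) hpos hstep
        _ = (a1 * (a2 * 2))⁻¹ * (k ^ 2)⁻¹ := by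
            have hk' : k ≠ 0 := by positivity
            field_simp
  -- r k := k / sqrt (S k) tends to 0
  have hr : Tendsto (fun k : ℝ =>
      k / Real.sqrt (a1 * (a2 * ((k + c) ^ (m + 1) - (k - 1) ^ (m + 1)))))
      atTop (nhds 0) := by
    have h1 : Tendsto (fun k : ℝ =>
        Real.sqrt (k ^ 2 / (a1 * (a2 * ((k + c) ^ (m + 1) - (k - 1) ^ (m + 1))))))
        atTop (nhds 0) := by
      have := (Real.continuous_sqrt.tendsto 0).comp hq
      simpa [Function.comp_def] using this
    apply h1.congr'
    filter_upwards [eventually_ge_atTop (1 : ℝ)] with k hk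
    have hk0 : (0 : ℝ) ≤ k := by linarith
    rw [Real.sqrt_div (by positivity) _, Real.sqrt_sq hk0]
  have hrsmall : ∀ᶠ k : ℝ in atTop,
      k / Real.sqrt (a1 * (a2 * ((k + c) ^ (m + 1) - (k - 1) ^ (m + 1)))) < 1 / 2 :=
    hr.eventually_lt_const (by norm_num)
  refine tendsto_of_tendsto_of_tendsto_of_le_of_le'
    (g := fun _ : ℝ => (0 : ℝ))
    (h := fun k : ℝ => 2 *
      (k / Real.sqrt (a1 * (a2 * ((k + c) ^ (m + 1) - (k - 1) ^ (m + 1))))) ^ (m + 1))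
    tendsto_const_nhds ?_ ?_ ?_
  · have := (hr.pow (m + 1)).const_mul 2
    simpa using this
  · filter_upwards [eventually_ge_atTop (1 : ℝ)] with k hk
    have hk0 : (0 : ℝ) ≤ k := by linarith
    have h1 : 0 ≤ ∑' j : ℕ, k ^ (m + 1 + 2 * j) /
        ((Real.sqrt (a1 * (a2 * ((k + c) ^ (m + 1) - (k - 1) ^ (m + 1))))) ^ (m + 1 + 2 * j) *
          (((m + 1 + 2 * j)‼ : ℕ) : ℝ)) :=
      tsum_nonneg fun j => div_nonneg (pow_nonneg hk0 _)
        (mul_nonneg (pow_nonneg (Real.sqrt_nonneg _) _) (Nat.cast_nonneg _))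
    exact mul_nonneg (mul_nonneg (Real.sqrt_nonneg _) (Real.exp_pos _).le) h1
  · filter_upwards [eventually_ge_atTop (1 : ℝ), hrsmall] with k hk hks
    have hk0 : (0 : ℝ) ≤ k := by linarith
    set s : ℝ := Real.sqrt (a1 * (a2 * ((k + c) ^ (m + 1) - (k - 1) ^ (m + 1)))) with hsdef
    have hσ : 0 < s := Real.sqrt_pos.2 (hSpos k hk)
    have hr0 : 0 ≤ k / s := div_nonneg hk0 hσ.le
    have hr2 : (k / s) ^ 2 < 1 := by nlinarith
    have hterm : ∀ j : ℕ, k ^ (m + 1 + 2 * j) /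
        (s ^ (m + 1 + 2 * j) * (((m + 1 + 2 * j)‼ : ℕ) : ℝ)) ≤
        (k / s) ^ (m + 1) * ((k / s) ^ 2) ^ j := by
      intro j
      have hd : (1 : ℝ) ≤ (((m + 1 + 2 * j)‼ : ℕ) : ℝ) := by
        exact_mod_cast Nat.one_le_iff_ne_zero.2 (Nat.doubleFactorial_pos _).ne'
      have e : (k / s) ^ (m + 1) * ((k / s) ^ 2) ^ j =
          k ^ (m + 1 + 2 * j) / s ^ (m + 1 + 2 * j) := by
        rw [← pow_mul, ← pow_add, div_pow]
      calc k ^ (m + 1 + 2 * j) / (s ^ (m + 1 + 2 * j) * (((m + 1 + 2 * j)‼ : ℕ) : ℝ))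
          ≤ k ^ (m + 1 + 2 * j) / s ^ (m + 1 + 2 * j) :=
            div_le_div_of_nonneg_left (pow_nonneg hk0 _) (pow_pos hσ _)
              (le_mul_of_one_le_right (pow_nonneg hσ.le _) hd)
        _ = (k / s) ^ (m + 1) * ((k / s) ^ 2) ^ j := e.symm
    have hgeosum : Summable (fun j : ℕ => (k / s) ^ (m + 1) * ((k / s) ^ 2) ^ j) :=
      (summable_geometric_of_lt_one (by positivity) hr2).mul_left _
    have hlsum : Summable (fun j : ℕ => k ^ (m + 1 + 2 * j) /
        (s ^ (m + 1 + 2 * j) * (((m + 1 + 2 * j)‼ : ℕ) : ℝ))) :=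
      Summable.of_nonneg_of_le (fun j => div_nonneg (pow_nonneg hk0 _)
        (mul_nonneg (pow_nonneg hσ.le _) (Nat.cast_nonneg _))) hterm hgeosum
    have hts : (∑' j : ℕ, k ^ (m + 1 + 2 * j) /
        (s ^ (m + 1 + 2 * j) * (((m + 1 + 2 * j)‼ : ℕ) : ℝ))) ≤
        (k / s) ^ (m + 1) * (1 - (k / s) ^ 2)⁻¹ := by
      calc _ ≤ ∑' j : ℕ, (k / s) ^ (m + 1) * ((k / s) ^ 2) ^ j :=
            Summable.tsum_le_tsum hterm hlsum hgeosum
        _ = (k / s) ^ (m + 1) * (1 - (k / s) ^ 2)⁻¹ := by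
            rw [tsum_mul_left, tsum_geometric_of_lt_one (by positivity) hr2]
    have h34 : (1 : ℝ) / 2 ≤ 1 - (k / s) ^ 2 := by nlinarith
    have hinv : (1 - (k / s) ^ 2)⁻¹ ≤ 2 := by
      calc (1 - (k / s) ^ 2)⁻¹ ≤ ((1 : ℝ) / 2)⁻¹ := by
            apply inv_anti₀ (by norm_num) h34
        _ = 2 := by norm_num
    have hT2 : (∑' j : ℕ, k ^ (m + 1 + 2 * j) /
        (s ^ (m + 1 + 2 * j) * (((m + 1 + 2 * j)‼ : ℕ) : ℝ))) ≤ 2 * (k / s) ^ (m + 1) := by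
      calc _ ≤ (k / s) ^ (m + 1) * (1 - (k / s) ^ 2)⁻¹ := hts
        _ ≤ (k / s) ^ (m + 1) * 2 := by
            exact mul_le_mul_of_nonneg_left hinv (pow_nonneg hr0 _)
        _ = 2 * (k / s) ^ (m + 1) := mul_comm _ _
    have hs1 : Real.sqrt (2 / π) ≤ 1 := Real.sqrt_le_one.2 (by
      rw [div_le_one hπ]; exact Real.two_le_pi)
    have hs2 : Real.exp (-k ^ 2 /
        (2 * (a1 * (a2 * ((k + c) ^ (m + 1) - (k - 1) ^ (m + 1)))))) ≤ 1 := by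
      rw [Real.exp_le_one_iff]
      apply div_nonpos_of_nonpos_of_nonneg
      · nlinarith [sq_nonneg k]
      · nlinarith [hSpos k hk]
    have hprod : Real.sqrt (2 / π) * Real.exp (-k ^ 2 /
        (2 * (a1 * (a2 * ((k + c) ^ (m + 1) - (k - 1) ^ (m + 1)))))) ≤ 1 :=
      mul_le_one₀ hs1 (Real.exp_pos _).le hs2
    have hTnn : 0 ≤ ∑' j : ℕ, k ^ (m + 1 + 2 * j) /
        (s ^ (m + 1 + 2 * j) * (((m + 1 + 2 * j)‼ : ℕ) : ℝ)) :=
      tsum_nonneg fun j => div_nonneg (pow_nonneg hk0 _)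
        (mul_nonneg (pow_nonneg hσ.le _) (Nat.cast_nonneg _))
    calc Real.sqrt (2 / π) * Real.exp (-k ^ 2 /
          (2 * (a1 * (a2 * ((k + c) ^ (m + 1) - (k - 1) ^ (m + 1)))))) *
          (∑' j : ℕ, k ^ (m + 1 + 2 * j) /
            (s ^ (m + 1 + 2 * j) * (((m + 1 + 2 * j)‼ : ℕ) : ℝ)))
        ≤ 1 * (∑' j : ℕ, k ^ (m + 1 + 2 * j) /
            (s ^ (m + 1 + 2 * j) * (((m + 1 + 2 * j)‼ : ℕ) : ℝ))) :=
          mul_le_mul_of_nonneg_right hprod hTnn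
      _ = ∑' j : ℕ, k ^ (m + 1 + 2 * j) /
            (s ^ (m + 1 + 2 * j) * (((m + 1 + 2 * j)‼ : ℕ) : ℝ)) := one_mul _
      _ ≤ 2 * (k / s) ^ (m + 1) := hT2
end
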